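/- Let p ≥ 3 and s ≥ 1 be integers with s ≤ p/2, and let ε, Δ, n, τ > 0 satisfy ε n τ ≥ 16 Δ s log p. Consider a partition of the C(p,s) − 1 non-optimal supports into blocks P₁, ..., P_s where |P_t| = C(p−s, t)·C(s, t), and suppose a score function f satisfies f(S̃_t) − f(S*) ≥ (1/2) n t τ for the block minimizer S̃_t of each block P_t. Then ∑_{t=1}^{s} C(p−s, t)·C(s, t)·exp(−ε(f(S̃_t) − f(S*))/(2Δ)) ≤ ∑_{t=1}^{s} p^{−2t} ≤ 2 p^{−2}, and consequently the exponential mechanism over blocks selects S* with probability at least 1/(1 + 2p^{−2}). -/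

import Mathlib

/-- Block-wise bound for the mistakes method: if `ε n τ ≥ 16 Δ s log p` and the block
minimizers satisfy `f(S̃_t) − f(S*) ≥ (1/2) n t τ` (here `g t = f(S̃_t) − f(S*)`), then
`∑_{t=1}^s C(p−s,t)·C(s,t)·exp(−ε g_t/(2Δ)) ≤ ∑_{t=1}^s p^{−2t} ≤ 2p^{−2}`, and the
exponential mechanism over blocks selects `S*` with probability at least `1/(1+2p^{−2})`. -/
theorem stmt12 (p s : ℕ) (hp : 3 ≤ p) (hs : 1 ≤ s) (hsp : 2 * s ≤ p)
    (ε Δ n τ : ℝ) (hε : 0 < ε) (hΔ : 0 < Δ) (hn : 0 < n) (hτ : 0 < τ)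
    (hcond : 16 * Δ * s * Real.log p ≤ ε * n * τ)
    (g : ℕ → ℝ) (hg : ∀ t, 1 ≤ t → t ≤ s → (1 / 2) * n * (t : ℝ) * τ ≤ g t) :
    (∑ t ∈ Finset.Icc 1 s, ((p - s).choose t : ℝ) * (s.choose t : ℝ) *
        Real.exp (-(ε * g t) / (2 * Δ))
      ≤ ∑ t ∈ Finset.Icc 1 s, ((p : ℝ) ^ (2 * t))⁻¹) ∧
    (∑ t ∈ Finset.Icc 1 s, ((p : ℝ) ^ (2 * t))⁻¹ ≤ 2 / (p : ℝ) ^ 2) ∧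
    (1 / (1 + 2 / (p : ℝ) ^ 2)
      ≤ 1 / (1 + ∑ t ∈ Finset.Icc 1 s, ((p - s).choose t : ℝ) * (s.choose t : ℝ) *
          Real.exp (-(ε * g t) / (2 * Δ)))) := by
  have hp0 : (0 : ℝ) < (p : ℝ) := by positivity
  have hp1 : (1 : ℝ) < (p : ℝ) := by exact_mod_cast lt_of_lt_of_le (by norm_num) hp
  have hlogp : 0 < Real.log p := Real.log_pos hp1
  -- termwise bound
  have key : ∀ t ∈ Finset.Icc 1 s,
      ((p - s).choose t : ℝ) * (s.choose t : ℝ) * Real.exp (-(ε * g t) / (2 * Δ))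
        ≤ ((p : ℝ) ^ (2 * t))⁻¹ := by
    intro t ht
    simp only [Finset.mem_Icc] at ht
    obtain ⟨ht1, hts⟩ := ht
    have hchoose : ((p - s).choose t : ℝ) * (s.choose t : ℝ) ≤ (p : ℝ) ^ (2 * t) := by
      have h1 : (p - s).choose t ≤ p ^ t :=
        le_trans (Nat.choose_le_pow _ _) (Nat.pow_le_pow_left (Nat.sub_le _ _) t)
      have h2 : s.choose t ≤ p ^ t :=
        le_trans (Nat.choose_le_pow _ _) (Nat.pow_le_pow_left (by omega) t)
      have := Nat.mul_le_mul h1 h2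
      calc ((p - s).choose t : ℝ) * (s.choose t : ℝ)
          = (((p - s).choose t * s.choose t : ℕ) : ℝ) := by push_cast; ring
        _ ≤ ((p ^ t * p ^ t : ℕ) : ℝ) := by exact_mod_cast this
        _ = (p : ℝ) ^ (2 * t) := by push_cast [← pow_add]; ring_nf
    have hexp : Real.exp (-(ε * g t) / (2 * Δ)) ≤ ((p : ℝ) ^ (4 * t))⁻¹ := by
      have hrw : ((p : ℝ) ^ (4 * t))⁻¹ = Real.exp (-(((4 * t : ℕ) : ℝ) * Real.log p)) := by
        rw [Real.exp_neg, ← Real.log_pow, Real.exp_log (by positivity)]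
      rw [hrw, Real.exp_le_exp]
      -- need : -(ε * g t)/(2Δ) ≤ -(4t * log p), i.e. 4t log p ≤ ε g t / (2Δ)
      rw [div_le_iff₀ (by positivity)] at *
      have hgt := hg t ht1 hts
      have h1 : ε * ((1 / 2) * n * (t : ℝ) * τ) ≤ ε * g t :=
        mul_le_mul_of_nonneg_left hgt hε.le
      have h2 : (16 * Δ * s * Real.log p) * ((t : ℝ) / 2) ≤ (ε * n * τ) * ((t : ℝ) / 2) := by
        apply mul_le_mul_of_nonneg_right hcond
        positivity
      have hst : (8 : ℝ) * Δ * (t : ℝ) * Real.log p ≤ 8 * Δ * (s : ℝ) * (t : ℝ) * Real.log p := by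
        have hs1 : (1 : ℝ) ≤ (s : ℝ) := by exact_mod_cast hs
        nlinarith [mul_nonneg (mul_nonneg (mul_nonneg (by positivity : (0:ℝ) ≤ 8 * Δ)
          (sub_nonneg.mpr hs1)) (by positivity : (0:ℝ) ≤ (t:ℝ))) hlogp.le]
      push_cast
      push_cast at h2
      nlinarith [h1, h2, hst]
    have hnn : (0 : ℝ) ≤ ((p - s).choose t : ℝ) * (s.choose t : ℝ) := by positivity
    calc ((p - s).choose t : ℝ) * (s.choose t : ℝ) * Real.exp (-(ε * g t) / (2 * Δ))
        ≤ (p : ℝ) ^ (2 * t) * ((p : ℝ) ^ (4 * t))⁻¹ := by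
          apply mul_le_mul hchoose hexp (Real.exp_pos _).le (by positivity)
      _ = ((p : ℝ) ^ (2 * t))⁻¹ := by
          rw [show 4 * t = 2 * t + 2 * t by ring, pow_add]
          field_simp
    
  have first : ∑ t ∈ Finset.Icc 1 s, ((p - s).choose t : ℝ) * (s.choose t : ℝ) *
      Real.exp (-(ε * g t) / (2 * Δ)) ≤ ∑ t ∈ Finset.Icc 1 s, ((p : ℝ) ^ (2 * t))⁻¹ :=
    Finset.sum_le_sum key
  have second : ∑ t ∈ Finset.Icc 1 s, ((p : ℝ) ^ (2 * t))⁻¹ ≤ 2 / (p : ℝ) ^ 2 := by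
    set r : ℝ := ((p : ℝ) ^ 2)⁻¹ with hr
    have hr0 : 0 < r := by positivity
    have hr9 : r ≤ 1 / 9 := by
      rw [hr]
      rw [inv_le_comm₀ (by positivity) (by norm_num)]
      have : (9 : ℝ) ≤ (p : ℝ) ^ 2 := by
        have : (3 : ℝ) ≤ (p : ℝ) := by exact_mod_cast hp
        nlinarith
      linarith
    have hsum : ∑ t ∈ Finset.Icc 1 s, ((p : ℝ) ^ (2 * t))⁻¹
        = r * ∑ i ∈ Finset.range s, r ^ i := by
      rw [Finset.mul_sum]
      rw [show Finset.Icc 1 s = Finset.Ico 1 (s + 1) by rfl]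
      rw [Finset.sum_Ico_eq_sum_range]
      simp only [Nat.add_sub_cancel]
      apply Finset.sum_congr rfl
      intro i _
      rw [pow_mul, ← inv_pow, ← hr, pow_add, pow_one]
    rw [hsum]
    have hgeom : ∑ i ∈ Finset.range s, r ^ i ≤ 2 := by
      have hr1 : r < 1 := by linarith
      have := geom_sum_eq (ne_of_lt hr1) s
      rw [this]
      rw [div_le_iff_of_neg (by linarith)]
      have : (0:ℝ) ≤ r ^ s := by positivity
      nlinarith
    calc r * ∑ i ∈ Finset.range s, r ^ i ≤ r * 2 := by
          apply mul_le_mul_of_nonneg_left hgeom hr0.le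
      _ = 2 / (p : ℝ) ^ 2 := by rw [hr]; ring
  refine ⟨first, second, ?_⟩
  have hnn : 0 ≤ ∑ t ∈ Finset.Icc 1 s, ((p - s).choose t : ℝ) * (s.choose t : ℝ) *
      Real.exp (-(ε * g t) / (2 * Δ)) := by
    apply Finset.sum_nonneg
    intro t _
    positivity
  apply one_div_le_one_div_of_le (by linarith)
  linarith
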